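/- (Safe interleaving sets from strongly safe interleavings under a simplified semantic model) Let fragments have total semantics ⟦·⟧ : S → S and let G = (V, E) be a DAG of fragments. Call an interleaving (v, (v_s, v_t)) strongly safe if ⟦v⟧ commutes with ⟦u⟧ for every u with a path to v_s in G and for every u reachable from v_t in G. Then for any event list h, all of whose threads execute paths in G and all of whose interleaving occurrences are strongly safe, there exists a sequential event list h' with the same per-thread projections and the same composite semantics, where sequential means the events of each maximal path-execution appear contiguously. -/

import Mathlib

set_option linter.unusedSectionVars false
namespace Stmt17Aux

variable {V T S : Type*} [DecidableEq V] [DecidableEq T]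
variable (edge : V → V → Prop) [DecidableRel edge] (sem : V → S → S)

/-- Extract the maximal edge-chain of `t`-events starting from current vertex `v`. -/
def extract (t : T) : V → List (V × T) → List (V × T) × List (V × T)
  | _, [] => ([], [])
  | v, e :: l =>
    if e.2 = t then
      if edge v e.1 then
        let p := extract t e.1 l
        (e :: p.1, p.2)
      else ([], e :: l)
    else
      let p := extract t v l
      (p.1, e :: p.2)

variable {edge}

theorem extract_nil (t : T) (v : V) : extract edge t v ([] : List (V × T)) = ([], []) := rfl

theorem extract_cons (t : T) (v : V) (e : V × T) (l : List (V × T)) :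
    extract edge t v (e :: l) =
      if e.2 = t then
        if edge v e.1 then
          ((e :: (extract edge t e.1 l).1), (extract edge t e.1 l).2)
        else ([], e :: l)
      else ((extract edge t v l).1, e :: (extract edge t v l).2) := by
  simp [extract]

theorem extract_sublist (t : T) : ∀ (l : List (V × T)) (v : V),
    List.Sublist (extract edge t v l).2 l := by
  intro l
  induction l with
  | nil => intro v; simp [extract_nil]
  | cons e l ih =>
    intro v
    rw [extract_cons]
    by_cases h1 : e.2 = t
    · by_cases h2 : edge v e.1
      · simp [h1, h2]; exact (ih e.1).trans (List.sublist_cons_self _ _)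
      · simp [h1, h2]
    · simp [h1]; exact ih v

theorem extract_fst_mem (t : T) : ∀ (l : List (V × T)) (v : V),
    ∀ x ∈ (extract edge t v l).1, x.2 = t := by
  intro l
  induction l with
  | nil => intro v; simp [extract_nil]
  | cons e l ih =>
    intro v x hx
    rw [extract_cons] at hx
    by_cases h1 : e.2 = t
    · by_cases h2 : edge v e.1
      · simp [h1, h2] at hx
        rcases hx with rfl | hx
        · exact h1
        · exact ih e.1 x hx
      · simp [h1, h2] at hx
    · simp [h1] at hx; exact ih v x hx

theorem extract_rtg (t : T) : ∀ (l : List (V × T)) (v : V),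
    ∀ x ∈ (extract edge t v l).1, Relation.ReflTransGen edge v x.1 := by
  intro l
  induction l with
  | nil => intro v; simp [extract_nil]
  | cons e l ih =>
    intro v x hx
    rw [extract_cons] at hx
    by_cases h1 : e.2 = t
    · by_cases h2 : edge v e.1
      · simp [h1, h2] at hx
        rcases hx with rfl | hx
        · exact Relation.ReflTransGen.single h2
        · exact Relation.ReflTransGen.head h2 (ih e.1 x hx)
      · simp [h1, h2] at hx
    · simp [h1] at hx; exact ih v x hx

theorem extract_filter_t (t : T) : ∀ (l : List (V × T)) (v : V),
    l.filter (fun e => e.2 = t) =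
      (extract edge t v l).1 ++ (extract edge t v l).2.filter (fun e => e.2 = t) := by
  intro l
  induction l with
  | nil => intro v; simp [extract_nil]
  | cons e l ih =>
    intro v
    rw [extract_cons]
    by_cases h1 : e.2 = t
    · by_cases h2 : edge v e.1
      · simp only [h1, h2, if_true]
        simp only [List.filter_cons, h1, if_true]
        rw [ih e.1]; simp
      · simp [h1, h2]
    · simp only [h1, if_false]
      simp only [List.filter_cons, h1]
      rw [ih v]
      simp [h1]

theorem extract_filter_ne (t t' : T) (hne : t' ≠ t) : ∀ (l : List (V × T)) (v : V),
    l.filter (fun e => e.2 = t') = (extract edge t v l).2.filter (fun e => e.2 = t') := by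
  intro l
  induction l with
  | nil => intro v; simp [extract_nil]
  | cons e l ih =>
    intro v
    rw [extract_cons]
    by_cases h1 : e.2 = t
    · by_cases h2 : edge v e.1
      · simp only [h1, h2, if_true]
        rw [List.filter_cons]
        have : ¬ (e.2 = t') := by rw [h1]; exact fun hh => hne hh.symm
        simp [this, ih e.1]
      · simp [h1, h2]
    · simp only [h1, if_false]
      rw [List.filter_cons, List.filter_cons]
      rw [ih v]

/-- Decomposition: if extraction finds a first chain element `c`. -/
theorem extract_fst_eq_cons (t : T) : ∀ (l : List (V × T)) (v : V) (c : V × T)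
    (s' : List (V × T)), (extract edge t v l).1 = c :: s' →
    ∃ B C, l = B ++ c :: C ∧ (∀ b ∈ B, b.2 ≠ t) ∧ c.2 = t ∧ edge v c.1 ∧
      s' = (extract edge t c.1 C).1 ∧ (extract edge t v l).2 = B ++ (extract edge t c.1 C).2 := by
  intro l
  induction l with
  | nil => intro v c s' hc; simp [extract_nil] at hc
  | cons e l ih =>
    intro v c s' hc
    rw [extract_cons] at hc ⊢
    by_cases h1 : e.2 = t
    · by_cases h2 : edge v e.1
      · rw [if_pos h1, if_pos h2] at hc ⊢
        injection hc with hc1 hc2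
        subst hc1; subst hc2
        exact ⟨[], l, by simp, by simp, h1, h2, rfl, by simp⟩
      · rw [if_pos h1, if_neg h2] at hc; simp at hc
    · rw [if_neg h1] at hc ⊢
      obtain ⟨B, C, rfl, hB, hct, hedge, hs', hr⟩ := ih v c s' hc
      refine ⟨e :: B, C, by simp, ?_, hct, hedge, hs', by simp [hr]⟩
      intro b hb
      rcases List.mem_cons.mp hb with rfl | hb
      · exact h1
      · exact hB b hb

/-- Last vertex of the chain (or `v` if the chain is empty). -/
def lastV (v : V) (s : List (V × T)) : V := ((s.getLast?).map Prod.fst).getD v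

theorem lastV_nil (v : V) : lastV v ([] : List (V × T)) = v := rfl

theorem lastV_cons (v : V) (e : V × T) (s : List (V × T)) :
    lastV v (e :: s) = lastV e.1 s := by
  cases s with
  | nil => simp [lastV]
  | cons a s =>
    obtain ⟨x, hx⟩ := Option.isSome_iff_exists.mp
      ((List.getLast?_isSome (l := a :: s)).mpr (by simp))
    simp [lastV, List.getLast?_cons_cons, hx]

/-- Maximality: the first `t`-event left in the remainder has no edge from the
last chain vertex. -/
theorem extract_max (t : T) : ∀ (l : List (V × T)) (v : V) (B : List (V × T))
    (c : V × T) (C : List (V × T)), (extract edge t v l).2 = B ++ c :: C →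
    (∀ b ∈ B, b.2 ≠ t) → c.2 = t → ¬ edge (lastV v (extract edge t v l).1) c.1 := by
  intro l
  induction l with
  | nil =>
    intro v B c C hr
    rw [extract_nil] at hr
    simp at hr
  | cons e l ih =>
    intro v B c C hr hB hct
    rw [extract_cons] at hr ⊢
    by_cases h1 : e.2 = t
    · by_cases h2 : edge v e.1
      · rw [if_pos h1, if_pos h2] at hr ⊢
        rw [lastV_cons]
        exact ih e.1 B c C hr hB hct
      · rw [if_pos h1, if_neg h2] at hr ⊢
        rw [lastV_nil]
        cases B with
        | nil =>
          simp at hr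
          rw [← hr.1]
          exact h2
        | cons b B =>
          simp at hr
          exact absurd h1 (hr.1 ▸ hB b (by simp))
    · rw [if_neg h1] at hr ⊢
      cases B with
      | nil =>
        simp at hr
        exact absurd hct (hr.1 ▸ h1)
      | cons b B =>
        simp at hr
        exact ih v B c C hr.2 (fun x hx => hB x (by simp [hx])) hct

/-- Composite semantics of an event list. -/
def F (sem : V → S → S) (l : List (V × T)) : S → S :=
  l.foldl (fun acc e => sem e.1 ∘ acc) id

theorem foldl_eq_F (l : List (V × T)) (a : S → S) :
    l.foldl (fun acc e => sem e.1 ∘ acc) a = F sem l ∘ a := by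
  induction l generalizing a with
  | nil => simp [F]
  | cons e l ih =>
    simp only [List.foldl_cons, F]
    rw [ih, ih (sem e.1 ∘ id)]
    rfl

theorem F_cons (e : V × T) (l : List (V × T)) :
    F sem (e :: l) = F sem l ∘ sem e.1 := by
  simp only [F, List.foldl_cons]
  rw [foldl_eq_F]
  rfl

theorem F_append (l1 l2 : List (V × T)) :
    F sem (l1 ++ l2) = F sem l2 ∘ F sem l1 := by
  simp only [F, List.foldl_append]
  rw [foldl_eq_F]
  rfl

theorem F_comm (g : S → S) (s : List (V × T))
    (hc : ∀ x ∈ s, g ∘ sem x.1 = sem x.1 ∘ g) :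
    F sem s ∘ g = g ∘ F sem s := by
  induction s with
  | nil => simp [F]
  | cons e s ih =>
    rw [F_cons]
    calc (F sem s ∘ sem e.1) ∘ g = F sem s ∘ (sem e.1 ∘ g) := rfl
      _ = F sem s ∘ (g ∘ sem e.1) := by rw [hc e (by simp)]
      _ = (F sem s ∘ g) ∘ sem e.1 := rfl
      _ = (g ∘ F sem s) ∘ sem e.1 := by rw [ih (fun x hx => hc x (by simp [hx]))]
      _ = g ∘ (F sem s ∘ sem e.1) := rfl

/-- The commutation data needed to pull the extracted chain to the front. -/
def Good (sem : V → S → S) (t : T) : V → List (V × T) → Prop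
  | _, [] => True
  | v, e :: l =>
    if e.2 = t then (edge v e.1 → Good sem t e.1 l)
    else (Good sem t v l ∧
      ∀ a ∈ (extract edge t v l).1, sem e.1 ∘ sem a.1 = sem a.1 ∘ sem e.1)

theorem good_nil (t : T) (v : V) : Good (edge := edge) sem t v [] := trivial

theorem good_cons_t (t : T) (v : V) (e : V × T) (l : List (V × T)) (h1 : e.2 = t) :
    Good (edge := edge) sem t v (e :: l) ↔ (edge v e.1 → Good (edge := edge) sem t e.1 l) := by
  simp [Good, h1]

theorem good_cons_ne (t : T) (v : V) (e : V × T) (l : List (V × T)) (h1 : ¬ e.2 = t) :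
    Good (edge := edge) sem t v (e :: l) ↔ (Good (edge := edge) sem t v l ∧
      ∀ a ∈ (extract edge t v l).1, sem e.1 ∘ sem a.1 = sem a.1 ∘ sem e.1) := by
  simp [Good, h1]

/-- Pulling the chain to the front preserves the composite semantics. -/
theorem F_extract (t : T) : ∀ (l : List (V × T)) (v : V),
    Good (edge := edge) sem t v l →
    F sem l = F sem ((extract edge t v l).1 ++ (extract edge t v l).2) := by
  intro l
  induction l with
  | nil => intro v _; simp [extract_nil]
  | cons e l ih =>
    intro v hg
    rw [extract_cons]
    by_cases h1 : e.2 = t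
    · by_cases h2 : edge v e.1
      · rw [if_pos h1, if_pos h2]
        rw [good_cons_t (h1 := h1)] at hg
        have := ih e.1 (hg h2)
        rw [F_cons, this, List.cons_append, F_cons]
      · rw [if_pos h1, if_neg h2]
        simp
    · rw [if_neg h1]
      rw [good_cons_ne (h1 := h1)] at hg
      have := ih v hg.1
      rw [F_cons, this]
      rw [F_append, F_append, F_cons]
      have hcomm : F sem (extract edge t v l).1 ∘ sem e.1
          = sem e.1 ∘ F sem (extract edge t v l).1 :=
        F_comm sem (sem e.1) _ (fun x hx => hg.2 x hx)
      calc F sem (extract edge t v l).2 ∘ F sem (extract edge t v l).1 ∘ sem e.1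
          = F sem (extract edge t v l).2 ∘ (F sem (extract edge t v l).1 ∘ sem e.1) := rfl
        _ = F sem (extract edge t v l).2 ∘ (sem e.1 ∘ F sem (extract edge t v l).1) := by
            rw [hcomm]
        _ = (F sem (extract edge t v l).2 ∘ sem e.1) ∘ F sem (extract edge t v l).1 := rfl

/-- List-splitting form of the strong-safety hypothesis. -/
def SafeP (sem : V → S → S) (h : List (V × T)) : Prop :=
  ∀ pre (a : V × T) B c C, h = pre ++ a :: (B ++ c :: C) → a.2 = c.2 →
    (∀ b ∈ B, b.2 ≠ a.2) → edge a.1 c.1 → ∀ b ∈ B,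
    (∀ u : V, Relation.ReflTransGen edge u a.1 → sem b.1 ∘ sem u = sem u ∘ sem b.1) ∧
    (∀ u : V, Relation.ReflTransGen edge c.1 u → sem b.1 ∘ sem u = sem u ∘ sem b.1)

theorem SafeP_tail (e : V × T) (l : List (V × T))
    (hs : SafeP (edge := edge) sem (e :: l)) : SafeP (edge := edge) sem l := by
  intro pre a B c C hl
  exact hs (e :: pre) a B c C (by rw [hl]; rfl)

/-- Correspondence lemma (no anchor): a split of the remainder lifts to a split of
the original list, inserting only `t`-events. -/
theorem extract_corr2 (t : T) : ∀ (l : List (V × T)) (v : V) (B : List (V × T))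
    (c : V × T) (C : List (V × T)), (extract edge t v l).2 = B ++ c :: C →
    ∃ B' C', l = B' ++ c :: C' ∧ (∀ b ∈ B, b ∈ B') ∧
      (∀ b ∈ B', b ∈ B ∨ b.2 = t) := by
  intro l
  induction l with
  | nil => intro v B c C hr; rw [extract_nil] at hr; simp at hr
  | cons e l ih =>
    intro v B c C hr
    rw [extract_cons] at hr
    by_cases h1 : e.2 = t
    · by_cases h2 : edge v e.1
      · rw [if_pos h1, if_pos h2] at hr
        obtain ⟨B', C', rfl, hmem, hins⟩ := ih e.1 B c C hr
        refine ⟨e :: B', C', rfl, fun b hb => by simp [hmem b hb], ?_⟩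
        intro b hb
        rcases List.mem_cons.mp hb with rfl | hb
        · exact Or.inr h1
        · exact hins b hb
      · rw [if_pos h1, if_neg h2] at hr
        exact ⟨B, C, hr, fun b hb => hb, fun b hb => Or.inl hb⟩
    · rw [if_neg h1] at hr
      cases B with
      | nil =>
        simp at hr
        obtain ⟨rfl, rfl⟩ := hr
        exact ⟨[], l, rfl, by simp, by simp⟩
      | cons b0 B =>
        simp at hr
        obtain ⟨he, hr⟩ := hr
        obtain ⟨B', C', rfl, hmem, hins⟩ := ih v B c C hr
        refine ⟨e :: B', C', rfl, ?_, ?_⟩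
        · intro b hb
          rcases List.mem_cons.mp hb with rfl | hb
          · exact List.mem_cons.mpr (Or.inl he.symm)
          · exact List.mem_cons.mpr (Or.inr (hmem b hb))
        · intro b hb
          rcases List.mem_cons.mp hb with rfl | hb
          · exact Or.inl (List.mem_cons.mpr (Or.inl he))
          · rcases hins b hb with hx | hx
            · exact Or.inl (List.mem_cons.mpr (Or.inr hx))
            · exact Or.inr hx

/-- Correspondence lemma (with anchor `a`). -/
theorem extract_corr (t : T) : ∀ (l : List (V × T)) (v : V) (pre : List (V × T))
    (a : V × T) (B : List (V × T)) (c : V × T) (C : List (V × T)),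
    (extract edge t v l).2 = pre ++ a :: (B ++ c :: C) →
    ∃ pre' B' C', l = pre' ++ a :: (B' ++ c :: C') ∧ (∀ b ∈ B, b ∈ B') ∧
      (∀ b ∈ B', b ∈ B ∨ (b.2 = t ∧ a.2 ≠ t)) := by
  intro l
  induction l with
  | nil => intro v pre a B c C hr; rw [extract_nil] at hr; simp at hr
  | cons e l ih =>
    intro v pre a B c C hr
    rw [extract_cons] at hr
    by_cases h1 : e.2 = t
    · by_cases h2 : edge v e.1
      · rw [if_pos h1, if_pos h2] at hr
        obtain ⟨pre', B', C', rfl, hmem, hins⟩ := ih e.1 pre a B c C hr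
        exact ⟨e :: pre', B', C', rfl, hmem, hins⟩
      · rw [if_pos h1, if_neg h2] at hr
        exact ⟨pre, B, C, hr, fun b hb => hb, fun b hb => Or.inl hb⟩
    · rw [if_neg h1] at hr
      cases pre with
      | nil =>
        simp at hr
        obtain ⟨rfl, hr⟩ := hr
        obtain ⟨B', C', rfl, hmem, hins⟩ := extract_corr2 (edge := edge) t l v B c C hr
        refine ⟨[], B', C', rfl, hmem, ?_⟩
        intro b hb
        rcases hins b hb with hx | hx
        · exact Or.inl hx
        · exact Or.inr ⟨hx, h1⟩
      | cons p0 pre =>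
        simp at hr
        obtain ⟨-, hr⟩ := hr
        obtain ⟨pre', B', C', rfl, hmem, hins⟩ := ih v pre a B c C hr
        exact ⟨e :: pre', B', C', rfl, hmem, hins⟩

/-- Strong safety transfers to the extraction remainder. -/
theorem SafeP_extract (t : T) (l : List (V × T)) (v : V)
    (hs : SafeP (edge := edge) sem l) :
    SafeP (edge := edge) sem (extract edge t v l).2 := by
  intro pre a B c C hr hac hB hedge b hb
  obtain ⟨pre', B', C', hl, hmem, hins⟩ :=
    extract_corr (edge := edge) t l v pre a B c C hr
  refine hs pre' a B' c C' hl hac ?_ hedge b (hmem b hb)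
  intro b' hb'
  rcases hins b' hb' with hx | hx
  · exact hB b' hx
  · rw [hx.1]; exact fun hcontra => hx.2 hcontra.symm

/-- From strong safety of the whole history, derive the commutation data `Good`. -/
theorem good_of_safe (t : T) : ∀ (l mid pre : List (V × T)) (a : V × T)
    (h : List (V × T)), h = pre ++ a :: (mid ++ l) →
    SafeP (edge := edge) sem h → a.2 = t → (∀ b ∈ mid, b.2 ≠ t) →
    Good (edge := edge) sem t a.1 l := by
  intro l
  induction l with
  | nil => intro mid pre a h _ _ _ _; exact good_nil sem t a.1
  | cons e l ih =>
    intro mid pre a h hh hs hat hmid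
    by_cases h1 : e.2 = t
    · rw [good_cons_t (h1 := h1)]
      intro _
      exact ih [] (pre ++ a :: mid) e h (by rw [hh]; simp) hs h1 (by simp)
    · rw [good_cons_ne (h1 := h1)]
      refine ⟨ih (mid ++ [e]) pre a h (by rw [hh]; simp) hs hat ?_, ?_⟩
      · intro b hb
        rcases List.mem_append.mp hb with hb | hb
        · exact hmid b hb
        · rw [List.mem_singleton.mp hb]; exact h1
      · intro a' ha'
        cases hx : (extract edge t a.1 l).1 with
        | nil => rw [hx] at ha'; simp at ha'
        | cons c s' =>
          rw [hx] at ha'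
          obtain ⟨B, C, hl', hBnt, hct, hedge, hs', -⟩ :=
            extract_fst_eq_cons (edge := edge) t l a.1 c s' hx
          have hsplit : h = pre ++ a :: ((mid ++ e :: B) ++ c :: C) := by
            rw [hh, hl']; simp
          have hBcond : ∀ b ∈ mid ++ e :: B, b.2 ≠ a.2 := by
            intro b hb
            rw [hat]
            rcases List.mem_append.mp hb with hb | hb
            · exact hmid b hb
            · rcases List.mem_cons.mp hb with rfl | hb
              · exact h1
              · exact hBnt b hb
          have hcl := (hs pre a (mid ++ e :: B) c C hsplit (by rw [hat, hct])
            hBcond hedge e (by simp)).2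
          rcases List.mem_cons.mp ha' with rfl | ha'
          · exact hcl a'.1 Relation.ReflTransGen.refl
          · exact hcl a'.1 (extract_rtg (edge := edge) t C c.1 a' (hs' ▸ ha'))

/-- Sequentiality in list-splitting form. -/
def SeqL (edge : V → V → Prop) (h : List (V × T)) : Prop :=
  ∀ pre (a : V × T) B c C, h = pre ++ a :: (B ++ c :: C) → a.2 = c.2 →
    (∀ b ∈ B, b.2 ≠ a.2) → edge a.1 c.1 → B = []

theorem lastV_of_concat (e : V × T) (s pre : List (V × T)) (a : V × T)
    (hseg : e :: s = pre ++ [a]) : lastV e.1 s = a.1 := by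
  have hlast : (e :: s).getLast? = some a := by rw [hseg, List.getLast?_concat]
  cases s with
  | nil =>
    simp at hlast
    rw [lastV_nil, hlast]
  | cons x s' =>
    rw [List.getLast?_cons_cons] at hlast
    simp [lastV, hlast]

theorem main_lemma (n : ℕ) : ∀ (h : List (V × T)), h.length ≤ n →
    SafeP (edge := edge) sem h →
    ∃ h' : List (V × T),
      (∀ t' : T, h.filter (fun e => e.2 = t') = h'.filter (fun e => e.2 = t')) ∧
      F sem h = F sem h' ∧ SeqL edge h' := by
  induction n with
  | zero =>
    intro h hlen _
    have : h = [] := List.eq_nil_of_length_eq_zero (Nat.le_zero.mp hlen)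
    subst this
    exact ⟨[], fun t' => rfl, rfl, fun pre a B c C habs _ _ _ => by simp at habs⟩
  | succ n ih =>
    intro h hlen hs
    cases h with
    | nil => exact ⟨[], fun t' => rfl, rfl, fun pre a B c C habs _ _ _ => by simp at habs⟩
    | cons e tail =>
      obtain ⟨t, ht⟩ : ∃ t, e.2 = t := ⟨e.2, rfl⟩
      obtain ⟨s, hsdef⟩ : ∃ s, (extract edge t e.1 tail).1 = s := ⟨_, rfl⟩
      obtain ⟨r, hrdef⟩ : ∃ r, (extract edge t e.1 tail).2 = r := ⟨_, rfl⟩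
      have hgood : Good (edge := edge) sem t e.1 tail :=
        good_of_safe sem t tail [] [] e (e :: tail) (by simp) hs ht (by simp)
      have hF1 : F sem tail = F sem (s ++ r) := by
        rw [← hsdef, ← hrdef]; exact F_extract sem t tail e.1 hgood
      have hsr : SafeP (edge := edge) sem r := by
        rw [← hrdef]; exact SafeP_extract sem t tail e.1 (SafeP_tail sem e tail hs)
      have hrlen : r.length ≤ n := by
        have h1 : List.Sublist r tail := hrdef ▸ extract_sublist t tail e.1
        have := h1.length_le
        simp at hlen
        omega
      obtain ⟨h'', hfil, hF2, hseq⟩ := ih r hrlen hsr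
      have hsmem : ∀ x ∈ s, x.2 = t := fun x hx =>
        extract_fst_mem t tail e.1 x (hsdef ▸ hx)
      have hsegmem : ∀ x ∈ e :: s, x.2 = t := by
        intro x hx
        rcases List.mem_cons.mp hx with rfl | hx
        · exact ht
        · exact hsmem x hx
      refine ⟨(e :: s) ++ h'', ?_, ?_, ?_⟩
      · -- filters
        intro t'
        by_cases hts : t' = t
        · subst hts
          rw [List.filter_cons, if_pos (by simp [ht])]
          have h1 : tail.filter (fun x => x.2 = t') = s ++ r.filter (fun x => x.2 = t') := by
            rw [← hsdef, ← hrdef]; exact extract_filter_t t' tail e.1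
          rw [h1, hfil t', List.filter_append, List.filter_cons, if_pos (by simp [ht])]
          have h2 : s.filter (fun x => x.2 = t') = s :=
            List.filter_eq_self.mpr (fun x hx => by simp [hsmem x hx])
          rw [h2]
          simp
        · rw [List.filter_cons, if_neg (by simp [ht]; exact fun hh => hts hh.symm)]
          have h1 : tail.filter (fun x => x.2 = t') = r.filter (fun x => x.2 = t') := by
            rw [← hrdef]; exact extract_filter_ne t t' hts tail e.1
          rw [h1, hfil t', List.filter_append]
          have h2 : (e :: s).filter (fun x => x.2 = t') = [] := by
            rw [List.filter_eq_nil_iff]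
            intro x hx
            simp [hsegmem x hx]
            exact fun hh => hts hh.symm
          rw [h2]
          simp
      · -- fold
        rw [F_cons, hF1, F_append, hF2, List.cons_append, F_cons, F_append]
      · -- sequentiality
        intro pre a B c C heq hac hB hedge
        rcases List.append_eq_append_iff.mp heq with ⟨w, hpre, hh''⟩ | ⟨w, hseg, hd⟩
        · exact hseq w a B c C hh'' hac hB hedge
        · rcases List.cons_eq_append_iff.mp hd with ⟨hw, hh''⟩ | ⟨w', hw, hrest⟩
          · exact hseq [] a B c C (by simpa using hh'') hac hB hedge
          · have hat : a.2 = t := hsegmem a (by rw [hseg, hw]; simp)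
            rcases List.append_eq_append_iff.mp hrest with ⟨u, hw', hcC⟩ | ⟨u, hBu, hh''2⟩
            · cases B with
              | nil => rfl
              | cons b0 B0 =>
                exfalso
                have hb0 : b0 ∈ e :: s := by rw [hseg, hw, hw']; simp
                exact hB b0 (by simp) ((hsegmem b0 hb0).trans hat.symm)
            · cases w' with
              | cons x w'' =>
                exfalso
                have hx : x ∈ e :: s := by rw [hseg, hw]; simp
                exact hB x (by rw [hBu]; simp) ((hsegmem x hx).trans hat.symm)
              | nil =>
                exfalso
                have hlastv : lastV e.1 s = a.1 :=
                  lastV_of_concat e s pre a (by rw [hseg, hw])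
                have hBu' : B = u := by simpa using hBu
                have hct : c.2 = t := by rw [← hac]; exact hat
                have hBnt : ∀ b ∈ B, b.2 ≠ t := fun b hb => by
                  rw [← hat]; exact hB b hb
                have hfilh : h''.filter (fun x => x.2 = t)
                    = c :: C.filter (fun x => x.2 = t) := by
                  rw [hh''2, ← hBu', List.filter_append]
                  have h3 : B.filter (fun x => x.2 = t) = [] := by
                    rw [List.filter_eq_nil_iff]
                    intro x hx
                    simp [hBnt x hx]
                  rw [h3, List.filter_cons, if_pos (by simp [hct])]
                  simp
                have hfilr : r.filter (fun x => x.2 = t)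
                    = c :: C.filter (fun x => x.2 = t) := by
                  rw [hfil t, hfilh]
                obtain ⟨B_r, C_r, hr_eq, hBr, -, -⟩ := List.filter_eq_cons_iff.mp hfilr
                have hmax := extract_max (edge := edge) t tail e.1 B_r c C_r
                  (by rw [hrdef]; exact hr_eq)
                  (fun x hx => by have := hBr x hx; simpa using this) hct
                rw [hsdef, hlastv] at hmax
                exact hmax hedge

theorem getElem_anchor (pre l2 : List (V × T)) (x : V × T) :
    (pre ++ x :: l2)[pre.length]'(by simp) = x := by
  rw [List.getElem_append_right (le_refl _)]
  simp

theorem getElem_after (pre l2 : List (V × T)) (x : V × T) (m : ℕ) (hm : m < l2.length) :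
    (pre ++ x :: l2)[pre.length + 1 + m]'(by simp; omega) = l2[m] := by
  rw [List.getElem_append_right (by omega)]
  simp only [show pre.length + 1 + m - pre.length = m + 1 from by omega,
    List.getElem_cons_succ]

theorem safeP_of_fin (h : List (V × T))
    (hsafe : ∀ i j k : Fin h.length, i < j → j < k →
      (h.get i).2 = (h.get k).2 → (h.get j).2 ≠ (h.get i).2 →
      (∀ m : Fin h.length, i < m → m < k → (h.get m).2 ≠ (h.get i).2) →
      edge (h.get i).1 (h.get k).1 →
      (∀ u : V, Relation.ReflTransGen edge u (h.get i).1 →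
        sem (h.get j).1 ∘ sem u = sem u ∘ sem (h.get j).1) ∧
      (∀ u : V, Relation.ReflTransGen edge (h.get k).1 u →
        sem (h.get j).1 ∘ sem u = sem u ∘ sem (h.get j).1)) :
    SafeP (edge := edge) sem h := by
  intro pre a B c C heq hac hB hedge b hb
  obtain ⟨nb, hnb, rfl⟩ := List.mem_iff_getElem.mp hb
  subst heq
  have hlen : (pre ++ a :: (B ++ c :: C)).length
      = pre.length + B.length + C.length + 2 := by simp; omega
  have hi : pre.length < (pre ++ a :: (B ++ c :: C)).length := by omega
  have hj : pre.length + 1 + nb < (pre ++ a :: (B ++ c :: C)).length := by omega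
  have hk : pre.length + 1 + B.length < (pre ++ a :: (B ++ c :: C)).length := by omega
  have hget_i : (pre ++ a :: (B ++ c :: C)).get ⟨pre.length, hi⟩ = a := by
    rw [List.get_eq_getElem]
    exact getElem_anchor pre (B ++ c :: C) a
  have hget_j : (pre ++ a :: (B ++ c :: C)).get ⟨pre.length + 1 + nb, hj⟩ = B[nb] := by
    rw [List.get_eq_getElem]
    rw [getElem_after pre (B ++ c :: C) a nb (by simp; omega)]
    exact List.getElem_append_left hnb
  have hget_k : (pre ++ a :: (B ++ c :: C)).get ⟨pre.length + 1 + B.length, hk⟩ = c := by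
    rw [List.get_eq_getElem]
    rw [getElem_after pre (B ++ c :: C) a B.length (by simp)]
    rw [List.getElem_append_right (le_refl _)]
    simp
  have H := hsafe ⟨pre.length, hi⟩ ⟨pre.length + 1 + nb, hj⟩ ⟨pre.length + 1 + B.length, hk⟩
    (Fin.mk_lt_mk.mpr (by omega)) (Fin.mk_lt_mk.mpr (by omega))
    (by rw [hget_i, hget_k]; exact hac)
    (by rw [hget_i, hget_j]; exact hB B[nb] (List.getElem_mem hnb))
    ?_ (by rw [hget_i, hget_k]; exact hedge)
  · rw [hget_i, hget_j, hget_k] at H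
    exact H
  · rintro ⟨mv, hmv⟩ hm1 hm2
    rw [Fin.mk_lt_mk] at hm1 hm2
    rw [hget_i]
    obtain ⟨m', rfl⟩ : ∃ m', mv = pre.length + 1 + m' :=
      ⟨mv - pre.length - 1, by omega⟩
    have hget_m : (pre ++ a :: (B ++ c :: C)).get ⟨pre.length + 1 + m', hmv⟩
        = B[m']'(by omega) := by
      rw [List.get_eq_getElem]
      rw [getElem_after pre (B ++ c :: C) a m' (by simp; omega)]
      exact List.getElem_append_left (by omega)
    rw [hget_m]
    exact hB (B[m']'(by omega)) (List.getElem_mem (by omega))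

end Stmt17Aux


open Stmt17Aux in

/-- Safe interleaving sets from strongly safe interleavings, simplified
semantic model: if every interleaving occurrence in h is strongly safe (the interleaved
fragment's semantics commutes with that of every fragment reaching v_s and of every
fragment reachable from v_t in the DAG), and each thread executes a concatenation of
paths of the DAG, then there is a sequential event list with the same per-thread
projections and the same composite semantics. -/
theorem stmt17 {V T S : Type*} [DecidableEq V] [DecidableEq T]
    (edge : V → V → Prop) [DecidableRel edge]
    (hacyc : ∀ v : V, ¬ Relation.TransGen edge v v)
    (sem : V → S → S)
    (h : List (V × T))
    (hwf : ∀ t : T, ∃ segs : List (List V),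
      (h.filter (fun e => e.2 = t)).map Prod.fst = segs.flatten ∧
      ∀ seg ∈ segs, seg.Chain' edge)
    (hsafe : ∀ i j k : Fin h.length, i < j → j < k →
      (h.get i).2 = (h.get k).2 → (h.get j).2 ≠ (h.get i).2 →
      (∀ m : Fin h.length, i < m → m < k → (h.get m).2 ≠ (h.get i).2) →
      edge (h.get i).1 (h.get k).1 →
      (∀ u : V, Relation.ReflTransGen edge u (h.get i).1 →
        sem (h.get j).1 ∘ sem u = sem u ∘ sem (h.get j).1) ∧
      (∀ u : V, Relation.ReflTransGen edge (h.get k).1 u →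
        sem (h.get j).1 ∘ sem u = sem u ∘ sem (h.get j).1)) :
    ∃ h' : List (V × T),
      (∀ t : T, h.filter (fun e => e.2 = t) = h'.filter (fun e => e.2 = t)) ∧
      h.foldl (fun acc e => sem e.1 ∘ acc) id
        = h'.foldl (fun acc e => sem e.1 ∘ acc) id ∧
      (∀ i j k : Fin h'.length, i < j → j < k →
        (h'.get i).2 = (h'.get k).2 →
        (∀ m : Fin h'.length, i < m → m < k → (h'.get m).2 ≠ (h'.get i).2) →
        edge (h'.get i).1 (h'.get k).1 → (h'.get j).2 = (h'.get i).2) := by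
  obtain ⟨h', hfil, hF, hseqL⟩ := main_lemma (edge := edge) sem h.length h (le_refl _)
    (safeP_of_fin sem h hsafe)
  refine ⟨h', hfil, hF, ?_⟩
  rintro ⟨iv, hiv⟩ ⟨jv, hjv⟩ ⟨kv, hkv⟩ hij hjk hik hm hedge
  rw [Fin.mk_lt_mk] at hij hjk
  exfalso
  have h2 : List.drop kv h' = h'[kv] :: List.drop (kv + 1) h' :=
    List.drop_eq_getElem_cons hkv
  have h3 : List.drop (iv + 1) h'
      = List.take (kv - (iv + 1)) (List.drop (iv + 1) h') ++ List.drop kv h' := by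
    conv_lhs => rw [← List.take_append_drop (kv - (iv + 1)) (List.drop (iv + 1) h')]
    rw [List.drop_drop]
    congr 2
    omega
  have h1 : List.drop iv h' = h'[iv] :: List.drop (iv + 1) h' :=
    List.drop_eq_getElem_cons hiv
  have hdecomp : h' = h'.take iv ++ h'[iv] ::
      (List.take (kv - (iv + 1)) (List.drop (iv + 1) h') ++ h'[kv] :: List.drop (kv + 1) h') := by
    conv_lhs => rw [← List.take_append_drop iv h', h1, h3, h2]
  have hBlen : (List.take (kv - (iv + 1)) (List.drop (iv + 1) h')).length = kv - iv - 1 := by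
    rw [List.length_take, List.length_drop]
    omega
  have hBnil := hseqL (h'.take iv) h'[iv]
    (List.take (kv - (iv + 1)) (List.drop (iv + 1) h')) h'[kv] (List.drop (kv + 1) h')
    hdecomp ?_ ?_ ?_
  · rw [hBnil] at hBlen
    simp at hBlen
    omega
  · simpa [List.get_eq_getElem] using hik
  · intro b hb
    obtain ⟨n0, hn0, rfl⟩ := List.mem_iff_getElem.mp hb
    have hval : (List.take (kv - (iv + 1)) (List.drop (iv + 1) h'))[n0]
        = h'[iv + 1 + n0]'(by rw [hBlen] at hn0; omega) := by
      rw [List.getElem_take, List.getElem_drop]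
    rw [hval]
    have hn0' : n0 < kv - iv - 1 := by rw [hBlen] at hn0; exact hn0
    have := hm ⟨iv + 1 + n0, by omega⟩ (Fin.mk_lt_mk.mpr (by omega))
      (Fin.mk_lt_mk.mpr (by omega))
    simpa [List.get_eq_getElem] using this
  · simpa [List.get_eq_getElem] using hedge
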